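/- Let A be an n×n Hermitian complex matrix, let Z be an n×k complex matrix which is an isometry (Zᴴ Z = I_k), and let f : ℝ → ℝ be a convex function. Then for every j ≥ 1 with 2j−1 ≤ k, λ_{2j-1}(f(Zᴴ A Z)) ≤ λ_j(Zᴴ f(A) Z), where λ_j(·) denotes the j-th largest eigenvalue counted with multiplicity. -/

import Mathlib

open Matrix

/-- The `j`-th largest eigenvalue of a Hermitian matrix (`0`-indexed, so `eigDesc hA ⟨0, _⟩`
is the largest), counted with multiplicity. -/
noncomputable def eigDesc {n : ℕ} {A : Matrix (Fin n) (Fin n) ℂ} (hA : A.IsHermitian)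
    (j : Fin n) : ℝ :=
  hA.eigenvalues (Tuple.sort hA.eigenvalues j.rev)

/-- Applying a real function to a Hermitian matrix via the functional calculus yields a
Hermitian matrix. -/
lemma isHermitian_cfc {n : ℕ} {A : Matrix (Fin n) (Fin n) ℂ} (hA : A.IsHermitian)
    (f : ℝ → ℝ) : (hA.cfc f).IsHermitian := by
  rw [← hA.cfc_eq]
  exact cfc_predicate f A

lemma isHermitian_half_smul {n : ℕ} {X : Matrix (Fin n) (Fin n) ℂ} (hX : X.IsHermitian) :
    ((2 : ℝ)⁻¹ • X).IsHermitian := by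
  show _ = _
  rw [Matrix.conjTranspose_smul, star_trivial, hX.eq]

lemma isHermitian_sum_conj {m n : ℕ} {A : Fin m → Matrix (Fin n) (Fin n) ℂ}
    (Z : Fin m → Matrix (Fin n) (Fin n) ℂ) (hA : ∀ i, (A i).IsHermitian) :
    (∑ i, (Z i)ᴴ * A i * Z i).IsHermitian := by
  show _ = _
  rw [Matrix.conjTranspose_sum]
  exact Finset.sum_congr rfl fun i _ => (isHermitian_conjTranspose_mul_mul (Z i) (hA i)).eq


open Finset

section sorting
variable {k : ℕ}

/-- pivot value -/
noncomputable def piv (μ : Fin k → ℝ) (m : Fin k) : ℝ := μ (Tuple.sort μ m.rev)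

open scoped Classical in
lemma card_ge_piv_ge (μ : Fin k → ℝ) (m : Fin k) :
    m.val + 1 ≤ (univ.filter fun i => piv μ m ≤ μ i).card := by
  have h := Finset.card_le_card_of_injOn (s := Finset.Ici m.rev)
    (t := univ.filter fun i => piv μ m ≤ μ i) (Tuple.sort μ) (fun p hp => ?_)
    ((Tuple.sort μ).injective.injOn)
  · have : (Finset.Ici m.rev).card = m.val + 1 := by
      rw [Fin.card_Ici, Fin.val_rev]; have := m.isLt; omega
    omega
  · simp only [mem_coe, mem_filter, mem_univ, true_and]
    exact Tuple.monotone_sort μ (Finset.mem_Ici.mp hp)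

open scoped Classical in
lemma card_ge_piv_le (μ : Fin k → ℝ) (m : Fin k) :
    k - m.val ≤ (univ.filter fun i => μ i ≤ piv μ m).card := by
  have h := Finset.card_le_card_of_injOn (s := Finset.Iic m.rev)
    (t := univ.filter fun i => μ i ≤ piv μ m) (Tuple.sort μ) (fun p hp => ?_)
    ((Tuple.sort μ).injective.injOn)
  · have : (Finset.Iic m.rev).card = k - m.val := by
      rw [Fin.card_Iic, Fin.val_rev]; have := m.isLt; omega
    omega
  · simp only [mem_coe, mem_filter, mem_univ, true_and]
    exact Tuple.monotone_sort μ (Finset.mem_Iic.mp hp)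

open scoped Classical in
lemma card_gt_piv_le (μ : Fin k → ℝ) (m : Fin k) :
    (univ.filter fun i => piv μ m < μ i).card ≤ m.val := by
  have h1 := card_ge_piv_le μ m
  have h2 := Finset.card_filter_add_card_filter_not (s := univ)
    (p := fun i => μ i ≤ piv μ m)
  simp only [not_le] at h2
  have h3 : (univ : Finset (Fin k)).card = k := by simp
  have := m.isLt
  omega

open scoped Classical in
lemma card_lt_piv_le (μ : Fin k → ℝ) (m : Fin k) :
    (univ.filter fun i => μ i < piv μ m).card ≤ k - 1 - m.val := by
  have h1 := card_ge_piv_ge μ m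
  have h2 := Finset.card_filter_add_card_filter_not (s := univ)
    (p := fun i => piv μ m ≤ μ i)
  simp only [not_le] at h2
  have h3 : (univ : Finset (Fin k)).card = k := by simp
  have := m.isLt
  omega

end sorting

section spans
variable {k : ℕ}

/-- span of columns of `U` indexed by `S`. -/
noncomputable def sspan (U : Matrix (Fin k) (Fin k) ℂ) (S : Finset (Fin k)) :
    Submodule ℂ (Fin k → ℂ) :=
  Submodule.map U.mulVecLin
    (Submodule.span ℂ (Set.range fun i : S => Pi.single (i : Fin k) (1 : ℂ)))

lemma coordSpan_finrank (S : Finset (Fin k)) :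
    Module.finrank ℂ (Submodule.span ℂ
        (Set.range fun i : S => (Pi.single (i : Fin k) (1 : ℂ) : Fin k → ℂ)))
      = S.card := by
  have hli : LinearIndependent ℂ (fun i : S => (Pi.single (i : Fin k) (1 : ℂ) : Fin k → ℂ)) := by
    have hli := (Pi.basisFun ℂ (Fin k)).linearIndependent
    have heq : (fun i : S => Pi.single (i : Fin k) (1 : ℂ))
        = (⇑(Pi.basisFun ℂ (Fin k))) ∘ (fun i : S => (i : Fin k)) := by
      funext i; simp [Pi.basisFun_apply]
    rw [heq]
    exact hli.comp _ Subtype.val_injective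
  rw [finrank_span_eq_card hli]
  simp

lemma coordSpan_support (S : Finset (Fin k)) {w : Fin k → ℂ}
    (hw : w ∈ Submodule.span ℂ (Set.range fun i : S => Pi.single (i : Fin k) (1 : ℂ)))
    {i : Fin k} (hi : i ∉ S) : w i = 0 := by
  have hle : Submodule.span ℂ (Set.range fun i : S => Pi.single (i : Fin k) (1 : ℂ))
      ≤ Submodule.pi (↑(Sᶜ) : Set (Fin k)) (fun _ => (⊥ : Submodule ℂ ℂ)) := by
    rw [Submodule.span_le]
    rintro _ ⟨a, rfl⟩
    intro b hb
    simp only [Finset.coe_compl, Set.mem_compl_iff, mem_coe] at hb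
    have : (a : Fin k) ≠ b := fun h => hb (h ▸ a.2)
    exact Pi.single_eq_of_ne this.symm 1
  have := hle hw i (by simpa using hi)
  simpa using this

lemma mulVec_injective_of_unitary {U : Matrix (Fin k) (Fin k) ℂ}
    (hU : U ∈ Matrix.unitaryGroup (Fin k) ℂ) : Function.Injective U.mulVecLin := by
  intro a b hab
  have h1 : star U * U = 1 := Matrix.mem_unitaryGroup_iff'.mp hU
  have : (star U).mulVecLin (U.mulVecLin a) = (star U).mulVecLin (U.mulVecLin b) := by rw [hab]
  simpa [Matrix.mulVecLin_apply, Matrix.mulVec_mulVec, h1] using this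

lemma sspan_finrank {U : Matrix (Fin k) (Fin k) ℂ}
    (hU : U ∈ Matrix.unitaryGroup (Fin k) ℂ) (S : Finset (Fin k)) :
    Module.finrank ℂ (sspan U S) = S.card := by
  rw [sspan, ← coordSpan_finrank S]

  exact (LinearEquiv.finrank_eq
    (Submodule.equivMapOfInjective _ (mulVec_injective_of_unitary hU) _)).symm

lemma sspan_mem {U : Matrix (Fin k) (Fin k) ℂ} {S : Finset (Fin k)} {x : Fin k → ℂ}
    (hx : x ∈ sspan U S) : ∃ w : Fin k → ℂ, (∀ i ∉ S, w i = 0) ∧ x = U *ᵥ w := by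
  obtain ⟨w, hw, rfl⟩ := hx
  exact ⟨w, fun i hi => coordSpan_support S hw hi, rfl⟩

lemma sspan_inter {U V : Matrix (Fin k) (Fin k) ℂ}
    (hU : U ∈ Matrix.unitaryGroup (Fin k) ℂ) (hV : V ∈ Matrix.unitaryGroup (Fin k) ℂ)
    {S T : Finset (Fin k)} (h : k < S.card + T.card) :
    ∃ x : Fin k → ℂ, x ≠ 0 ∧ x ∈ sspan U S ∧ x ∈ sspan V T := by
  have h1 := Submodule.finrank_sup_add_finrank_inf_eq (sspan U S) (sspan V T)
  have h2 : Module.finrank ℂ ↥(sspan U S ⊔ sspan V T) ≤ k := by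
    have := Submodule.finrank_le (sspan U S ⊔ sspan V T)
    simpa [Module.finrank_pi] using this
  rw [sspan_finrank hU, sspan_finrank hV] at h1
  have h3 : 0 < Module.finrank ℂ ↥(sspan U S ⊓ sspan V T) := by omega
  haveI := (Module.finrank_pos_iff (R := ℂ)).mp h3
  obtain ⟨⟨x, hx⟩, hx0⟩ := exists_ne (0 : ↥(sspan U S ⊓ sspan V T))
  refine ⟨x, ?_, (Submodule.mem_inf.mp hx).1, (Submodule.mem_inf.mp hx).2⟩
  intro h0
  exact hx0 (by simp [Subtype.ext_iff, h0])

end spans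

section quad
variable {k n : ℕ}

lemma norm_sq_dot (x : Fin k → ℂ) :
    star x ⬝ᵥ x = ((∑ i, Complex.normSq (x i) : ℝ) : ℂ) := by
  simp [dotProduct, Complex.normSq_eq_conj_mul_self]

lemma quad_diag {U : Matrix (Fin k) (Fin k) ℂ} (hU : U ∈ Matrix.unitaryGroup (Fin k) ℂ)
    (d : Fin k → ℝ) (w : Fin k → ℂ) :
    star (U *ᵥ w) ⬝ᵥ (U * diagonal ((RCLike.ofReal : ℝ → ℂ) ∘ d) * star U) *ᵥ (U *ᵥ w)
      = ((∑ i, d i * Complex.normSq (w i) : ℝ) : ℂ) := by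
  have h1 : star U * U = 1 := Matrix.mem_unitaryGroup_iff'.mp hU
  rw [Matrix.mulVec_mulVec, star_mulVec, Matrix.dotProduct_mulVec, Matrix.vecMul_vecMul]
  have h2 : Uᴴ * (U * diagonal ((RCLike.ofReal : ℝ → ℂ) ∘ d) * star U * U)
      = diagonal ((RCLike.ofReal : ℝ → ℂ) ∘ d) := by
    rw [show (U * diagonal ((RCLike.ofReal : ℝ → ℂ) ∘ d) * star U * U)
        = U * diagonal ((RCLike.ofReal : ℝ → ℂ) ∘ d) * (star U * U) by
          simp only [mul_assoc],
      h1, mul_one, ← Matrix.star_eq_conjTranspose, ← mul_assoc, h1, one_mul]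
  rw [h2]
  simp only [Matrix.vecMul_diagonal, dotProduct, Pi.star_apply, Function.comp_apply]
  push_cast
  refine Finset.sum_congr rfl fun i _ => ?_
  rw [show ((RCLike.ofReal : ℝ → ℂ) (d i)) = ((d i : ℝ) : ℂ) from rfl,
    Complex.normSq_eq_conj_mul_self]
  simp only [Complex.star_def]
  ring

lemma norm_U_dot {U : Matrix (Fin k) (Fin k) ℂ} (hU : U ∈ Matrix.unitaryGroup (Fin k) ℂ)
    (w : Fin k → ℂ) :
    star (U *ᵥ w) ⬝ᵥ (U *ᵥ w) = ((∑ i, Complex.normSq (w i) : ℝ) : ℂ) := by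
  have h1 : star U * U = 1 := Matrix.mem_unitaryGroup_iff'.mp hU
  rw [star_mulVec, Matrix.dotProduct_mulVec, Matrix.vecMul_vecMul,
    ← Matrix.star_eq_conjTranspose, h1, Matrix.vecMul_one]
  exact norm_sq_dot w

lemma Z_transfer {Z : Matrix (Fin n) (Fin k) ℂ} (M : Matrix (Fin n) (Fin n) ℂ)
    (x : Fin k → ℂ) :
    star x ⬝ᵥ (Zᴴ * M * Z) *ᵥ x = star (Z *ᵥ x) ⬝ᵥ M *ᵥ (Z *ᵥ x) := by
  rw [star_mulVec, Matrix.mulVec_mulVec, Matrix.dotProduct_mulVec, Matrix.dotProduct_mulVec,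
    Matrix.vecMul_vecMul, Matrix.mul_assoc]

lemma Z_norm {Z : Matrix (Fin n) (Fin k) ℂ} (hZ : Zᴴ * Z = 1) (x : Fin k → ℂ) :
    star (Z *ᵥ x) ⬝ᵥ (Z *ᵥ x) = star x ⬝ᵥ x := by
  rw [star_mulVec, Matrix.dotProduct_mulVec, Matrix.vecMul_vecMul, hZ, Matrix.vecMul_one]

/-- Master decomposition: quadratic forms of `M` and of `hM.cfc f` along a vector in the
span of eigenvectors indexed by `S`. -/
lemma quad_of_mem_sspan {M : Matrix (Fin k) (Fin k) ℂ} (hM : M.IsHermitian)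
    {S : Finset (Fin k)} {x : Fin k → ℂ}
    (hx : x ∈ sspan (hM.eigenvectorUnitary : Matrix (Fin k) (Fin k) ℂ) S) :
    ∃ p : Fin k → ℝ, (∀ i, 0 ≤ p i) ∧ (∀ i ∉ S, p i = 0) ∧
      star x ⬝ᵥ x = ((∑ i, p i : ℝ) : ℂ) ∧
      (∀ g : ℝ → ℝ, star x ⬝ᵥ (hM.cfc g) *ᵥ x
        = ((∑ i, g (hM.eigenvalues i) * p i : ℝ) : ℂ)) ∧
      star x ⬝ᵥ M *ᵥ x = ((∑ i, hM.eigenvalues i * p i : ℝ) : ℂ) := by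
  obtain ⟨w, hw, rfl⟩ := sspan_mem hx
  have hU := (Matrix.IsHermitian.eigenvectorUnitary hM).2
  refine ⟨fun i => Complex.normSq (w i), fun i => Complex.normSq_nonneg _,
    fun i hi => by show Complex.normSq (w i) = 0; rw [hw i hi]; simp, norm_U_dot hU w, fun g => ?_, ?_⟩
  · rw [Matrix.IsHermitian.cfc]
    have := quad_diag hU (g ∘ hM.eigenvalues) w
    rw [show (RCLike.ofReal : ℝ → ℂ) ∘ g ∘ hM.eigenvalues
        = (RCLike.ofReal : ℝ → ℂ) ∘ (g ∘ hM.eigenvalues) from rfl] at this ⊢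
    exact this
  · have h := quad_diag hU hM.eigenvalues w
    have hs := hM.spectral_theorem
    simp only [Unitary.conjStarAlgAut_apply, Unitary.coe_star] at hs
    rw [← hs] at h
    exact h

end quad

section jensen
variable {n : ℕ}

lemma jensen_quad {A : Matrix (Fin n) (Fin n) ℂ} (hA : A.IsHermitian) {f : ℝ → ℝ}
    (hf : ConvexOn ℝ Set.univ f) (y : Fin n → ℂ) (hy : star y ⬝ᵥ y = 1) :
    ∃ t t' : ℝ, star y ⬝ᵥ A *ᵥ y = (t : ℂ) ∧ star y ⬝ᵥ (hA.cfc f) *ᵥ y = (t' : ℂ)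
      ∧ f t ≤ t' := by
  have hU := (Matrix.IsHermitian.eigenvectorUnitary hA).2
  have h1 : (hA.eigenvectorUnitary : Matrix (Fin n) (Fin n) ℂ)
      * star (hA.eigenvectorUnitary : Matrix (Fin n) (Fin n) ℂ)
      = 1 := Matrix.mem_unitaryGroup_iff.mp hU
  set u := (star (hA.eigenvectorUnitary : Matrix (Fin n) (Fin n) ℂ)) *ᵥ y with hu
  have hy' : (hA.eigenvectorUnitary : Matrix (Fin n) (Fin n) ℂ) *ᵥ u = y := by
    rw [hu, Matrix.mulVec_mulVec, h1, Matrix.one_mulVec]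
  have hAq : star y ⬝ᵥ A *ᵥ y
      = ((∑ i, hA.eigenvalues i * Complex.normSq (u i) : ℝ) : ℂ) := by
    have h := quad_diag hU hA.eigenvalues u
    have hs := hA.spectral_theorem
    simp only [Unitary.conjStarAlgAut_apply, Unitary.coe_star] at hs
    rw [← hs, hy'] at h
    exact h
  have hfq : star y ⬝ᵥ (hA.cfc f) *ᵥ y
      = ((∑ i, f (hA.eigenvalues i) * Complex.normSq (u i) : ℝ) : ℂ) := by
    have h := quad_diag hU (f ∘ hA.eigenvalues) u
    rw [hy'] at h
    rw [Matrix.IsHermitian.cfc]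
    exact h
  have hnorm : (∑ i, Complex.normSq (u i)) = 1 := by
    have h := norm_U_dot hU u
    rw [hy'] at h
    rw [h] at hy
    exact_mod_cast hy
  refine ⟨_, _, hAq, hfq, ?_⟩
  have h0 : ∀ i ∈ Finset.univ, 0 ≤ Complex.normSq (u i) :=
    fun i _ => Complex.normSq_nonneg _
  have hj := hf.map_sum_le (p := fun i => hA.eigenvalues i) h0 hnorm
    (fun _ _ => Set.mem_univ _)
  simp only [smul_eq_mul] at hj
  calc f (∑ i, hA.eigenvalues i * Complex.normSq (u i))
      = f (∑ i, Complex.normSq (u i) * hA.eigenvalues i) := by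
        congr 1; exact Finset.sum_congr rfl fun i _ => mul_comm _ _
    _ ≤ ∑ i, Complex.normSq (u i) * f (hA.eigenvalues i) := hj
    _ = ∑ i, f (hA.eigenvalues i) * Complex.normSq (u i) :=
        Finset.sum_congr rfl fun i _ => mul_comm _ _

end jensen

section main
open scoped Classical

variable {n k : ℕ} {A : Matrix (Fin n) (Fin n) ℂ} {Z : Matrix (Fin n) (Fin k) ℂ} {f : ℝ → ℝ}

lemma sum_normSq_pos {x : Fin k → ℂ} (hx0 : x ≠ 0) :
    (0:ℝ) < ∑ i, Complex.normSq (x i) := by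
  obtain ⟨i, hi⟩ := Function.ne_iff.mp hx0
  exact Finset.sum_pos' (fun i _ => Complex.normSq_nonneg _)
    ⟨i, Finset.mem_univ i, Complex.normSq_pos.mpr hi⟩

lemma key_exists (hA : A.IsHermitian) (hZ : Zᴴ * Z = 1) (hf : ConvexOn ℝ Set.univ f)
    (hB : (Zᴴ * A * Z).IsHermitian) (hC : (Zᴴ * hA.cfc f * Z).IsHermitian)
    (c : ℝ) (S : Finset (Fin k))
    (hcard : k < S.card + (Finset.univ.filter fun i => hC.eigenvalues i ≤ c).card) :
    ∃ t : ℝ, f t ≤ c ∧ (∀ d, (∀ i ∈ S, d ≤ hB.eigenvalues i) → d ≤ t)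
      ∧ (∀ d, (∀ i ∈ S, hB.eigenvalues i ≤ d) → t ≤ d) := by
  obtain ⟨x, hx0, hxB, hxC⟩ :=
    sspan_inter (Matrix.IsHermitian.eigenvectorUnitary hB).2
      (Matrix.IsHermitian.eigenvectorUnitary hC).2 hcard
  set N := ∑ i, Complex.normSq (x i) with hN
  have hNpos : 0 < N := sum_normSq_pos hx0
  set r : ℝ := (Real.sqrt N)⁻¹ with hr
  set x' : Fin k → ℂ := (r : ℂ) • x with hx'
  have hx'B : x' ∈ sspan ((Matrix.IsHermitian.eigenvectorUnitary hB) :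
      Matrix (Fin k) (Fin k) ℂ) S := Submodule.smul_mem _ _ hxB
  have hx'C : x' ∈ sspan ((Matrix.IsHermitian.eigenvectorUnitary hC) :
      Matrix (Fin k) (Fin k) ℂ) _ := Submodule.smul_mem _ _ hxC
  have hx'norm : star x' ⬝ᵥ x' = 1 := by
    rw [norm_sq_dot]
    have : ∀ i, Complex.normSq (x' i) = r ^ 2 * Complex.normSq (x i) := by
      intro i
      rw [hx']
      simp [Complex.normSq_mul, Complex.normSq_ofReal, sq]
    rw [Finset.sum_congr rfl fun i _ => this i, ← Finset.mul_sum, ← hN, hr]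
    rw [show ((Real.sqrt N)⁻¹) ^ 2 = ((Real.sqrt N) ^ 2)⁻¹ by rw [inv_pow],
      Real.sq_sqrt hNpos.le, inv_mul_cancel₀ hNpos.ne']
    norm_num
  obtain ⟨p, hp0, hpz, hpsum, _, hpquad⟩ := quad_of_mem_sspan hB hx'B
  obtain ⟨q, hq0, hqz, hqsum, _, hqquad⟩ := quad_of_mem_sspan hC hx'C
  have hpsum1 : (∑ i, p i) = 1 := by
    have := hpsum.symm.trans hx'norm
    exact_mod_cast this
  have hqsum1 : (∑ i, q i) = 1 := by
    have := hqsum.symm.trans hx'norm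
    exact_mod_cast this
  set y := Z *ᵥ x' with hy
  have hynorm : star y ⬝ᵥ y = 1 := by rw [hy, Z_norm hZ]; exact hx'norm
  obtain ⟨t₀, t₁, hAy, hCy, hft⟩ := jensen_quad hA hf y hynorm
  have ht0 : t₀ = ∑ i, hB.eigenvalues i * p i := by
    have h1 : star x' ⬝ᵥ (Zᴴ * A * Z) *ᵥ x' = (t₀ : ℂ) := by rw [Z_transfer]; exact hAy
    have := h1.symm.trans hpquad
    exact_mod_cast this
  have ht1 : t₁ = ∑ i, hC.eigenvalues i * q i := by
    have h1 : star x' ⬝ᵥ (Zᴴ * hA.cfc f * Z) *ᵥ x' = (t₁ : ℂ) := by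
      rw [Z_transfer]; exact hCy
    have := h1.symm.trans hqquad
    exact_mod_cast this
  refine ⟨t₀, ?_, ?_, ?_⟩
  · refine hft.trans ?_
    rw [ht1]
    calc ∑ i, hC.eigenvalues i * q i ≤ ∑ i, c * q i := by
          refine Finset.sum_le_sum fun i _ => ?_
          by_cases hiT : i ∈ (Finset.univ.filter fun i => hC.eigenvalues i ≤ c)
          · exact mul_le_mul_of_nonneg_right (Finset.mem_filter.mp hiT).2 (hq0 i)
          · rw [hqz i hiT]; simp
      _ = c := by rw [← Finset.mul_sum, hqsum1, mul_one]
  · intro d hd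
    rw [ht0]
    calc d = ∑ i, d * p i := by rw [← Finset.mul_sum, hpsum1, mul_one]
      _ ≤ ∑ i, hB.eigenvalues i * p i := by
          refine Finset.sum_le_sum fun i _ => ?_
          by_cases hiS : i ∈ S
          · exact mul_le_mul_of_nonneg_right (hd i hiS) (hp0 i)
          · rw [hpz i hiS]; simp
  · intro d hd
    rw [ht0]
    calc ∑ i, hB.eigenvalues i * p i ≤ ∑ i, d * p i := by
          refine Finset.sum_le_sum fun i _ => ?_
          by_cases hiS : i ∈ S
          · exact mul_le_mul_of_nonneg_right (hd i hiS) (hp0 i)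
          · rw [hpz i hiS]; simp
      _ = d := by rw [← Finset.mul_sum, hpsum1, mul_one]

end main

section final
open scoped Classical

lemma piv_cfc_le_of_count {k : ℕ} {B : Matrix (Fin k) (Fin k) ℂ} (hB : B.IsHermitian)
    {f : ℝ → ℝ} (hN : (hB.cfc f).IsHermitian) (c : ℝ) (m : Fin k)
    (hcount : k - m.val ≤ (Finset.univ.filter fun i => f (hB.eigenvalues i) ≤ c).card) :
    piv hN.eigenvalues m ≤ c := by
  set T := Finset.univ.filter fun i => f (hB.eigenvalues i) ≤ c with hT
  set S := Finset.univ.filter fun i => piv hN.eigenvalues m ≤ hN.eigenvalues i with hS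
  have hScard : m.val + 1 ≤ S.card := card_ge_piv_ge _ m
  have hm := m.isLt
  have hinter : k < S.card + T.card := by omega
  obtain ⟨x, hx0, hxS, hxT⟩ :=
    sspan_inter (Matrix.IsHermitian.eigenvectorUnitary hN).2
      (Matrix.IsHermitian.eigenvectorUnitary hB).2 hinter
  obtain ⟨p, hp0, hpz, hpsum, _, hpquad⟩ := quad_of_mem_sspan hN hxS
  obtain ⟨q, hq0, hqz, hqsum, hqcfc, _⟩ := quad_of_mem_sspan hB hxT
  have hquad_eq : (∑ i, hN.eigenvalues i * p i) = ∑ i, f (hB.eigenvalues i) * q i := by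
    have := hpquad.symm.trans (hqcfc f)
    exact_mod_cast this
  have hsum_eq : (∑ i, p i) = ∑ i, q i := by
    have := hpsum.symm.trans hqsum
    exact_mod_cast this
  have hppos : 0 < ∑ i, p i := by
    have h1 : star x ⬝ᵥ x = ((∑ i, Complex.normSq (x i) : ℝ) : ℂ) := norm_sq_dot x
    have h2 := h1.symm.trans hpsum
    have h3 : (∑ i, Complex.normSq (x i)) = ∑ i, p i := by exact_mod_cast h2
    rw [← h3]
    exact sum_normSq_pos hx0
  have hlow : piv hN.eigenvalues m * (∑ i, p i) ≤ ∑ i, hN.eigenvalues i * p i := by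
    rw [Finset.mul_sum]
    refine Finset.sum_le_sum fun i _ => ?_
    by_cases hiS : i ∈ S
    · exact mul_le_mul_of_nonneg_right (Finset.mem_filter.mp hiS).2 (hp0 i)
    · rw [hpz i hiS]; simp
  have hhigh : (∑ i, f (hB.eigenvalues i) * q i) ≤ c * ∑ i, q i := by
    rw [Finset.mul_sum]
    refine Finset.sum_le_sum fun i _ => ?_
    by_cases hiT : i ∈ T
    · exact mul_le_mul_of_nonneg_right (Finset.mem_filter.mp hiT).2 (hq0 i)
    · rw [hqz i hiT]; simp
  have := hlow.trans (hquad_eq ▸ hhigh)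
  rw [← hsum_eq] at this
  exact le_of_mul_le_mul_right (by linarith [this]) hppos

end final

open scoped Classical

/-- **Theorem 1.1 (Bourin), eigenvalue form.** If `A` is Hermitian, `Z` is an isometry and
`f` is convex, then `λ_{2j-1}(f(Zᴴ A Z)) ≤ λ_j(Zᴴ f(A) Z)` (eigenvalues in decreasing
order, `1`-based indexing). -/
theorem eig_compression_cfc_le
    {n k : ℕ} (A : Matrix (Fin n) (Fin n) ℂ) (hA : A.IsHermitian)
    (Z : Matrix (Fin n) (Fin k) ℂ) (hZ : Zᴴ * Z = 1)
    (f : ℝ → ℝ) (hf : ConvexOn ℝ Set.univ f)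
    (j : ℕ) (hj : 1 ≤ j) (hjk : 2 * j - 1 ≤ k) :
    eigDesc (isHermitian_cfc (isHermitian_conjTranspose_mul_mul Z hA) f)
        ⟨2 * j - 1 - 1, by omega⟩ ≤
      eigDesc (isHermitian_conjTranspose_mul_mul Z (isHermitian_cfc hA f))
        ⟨j - 1, by omega⟩ := by
  have hB := isHermitian_conjTranspose_mul_mul Z hA
  have hC := isHermitian_conjTranspose_mul_mul Z (isHermitian_cfc hA f)
  have hj1k : j - 1 < k := by omega
  have hkjk : k - j < k := by omega
  set μ := hB.eigenvalues with hμ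
  set ν := hC.eigenvalues with hν
  set c := piv ν ⟨j - 1, hj1k⟩ with hc
  show piv (isHermitian_cfc hB f).eigenvalues ⟨2 * j - 1 - 1, by omega⟩ ≤ c
  -- top j of B
  obtain ⟨t, hftc, hlowt, _⟩ := key_exists hA hZ hf hB hC c
    (Finset.univ.filter fun i => piv μ ⟨j - 1, hj1k⟩ ≤ μ i)
    (by
      have h1 : j - 1 + 1 ≤
          (Finset.univ.filter fun i => piv μ ⟨j - 1, hj1k⟩ ≤ μ i).card :=
        card_ge_piv_ge μ ⟨j - 1, hj1k⟩
      have h2 : k - (j - 1) ≤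
          (Finset.univ.filter fun i => hC.eigenvalues i ≤ c).card :=
        card_ge_piv_le hC.eigenvalues ⟨j - 1, hj1k⟩
      omega)
  have ht : piv μ ⟨j - 1, hj1k⟩ ≤ t :=
    hlowt _ (fun i hi => (Finset.mem_filter.mp hi).2)
  -- bottom j of B
  obtain ⟨s, hfsc, _, hhighs⟩ := key_exists hA hZ hf hB hC c
    (Finset.univ.filter fun i => μ i ≤ piv μ ⟨k - j, hkjk⟩)
    (by
      have h1 : k - (k - j) ≤
          (Finset.univ.filter fun i => μ i ≤ piv μ ⟨k - j, hkjk⟩).card :=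
        card_ge_piv_le μ ⟨k - j, hkjk⟩
      have h2 : k - (j - 1) ≤
          (Finset.univ.filter fun i => hC.eigenvalues i ≤ c).card :=
        card_ge_piv_le hC.eigenvalues ⟨j - 1, hj1k⟩
      omega)
  have hs : s ≤ piv μ ⟨k - j, hkjk⟩ :=
    hhighs _ (fun i hi => (Finset.mem_filter.mp hi).2)
  -- apply the final lemma
  apply piv_cfc_le_of_count hB (isHermitian_cfc hB f) c ⟨2 * j - 1 - 1, by omega⟩
  show k - (2 * j - 1 - 1) ≤ (Finset.univ.filter fun i => f (μ i) ≤ c).card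
  have hsub : (Finset.univ.filter fun i => ¬ f (μ i) ≤ c) ⊆
      (Finset.univ.filter fun i => t < μ i) ∪ (Finset.univ.filter fun i => μ i < s) := by
    intro i hi
    rw [Finset.mem_filter] at hi
    by_cases h1 : t < μ i
    · exact Finset.mem_union_left _ (Finset.mem_filter.mpr ⟨Finset.mem_univ _, h1⟩)
    by_cases h2 : μ i < s
    · exact Finset.mem_union_right _ (Finset.mem_filter.mpr ⟨Finset.mem_univ _, h2⟩)
    exfalso
    push_neg at h1 h2
    have hst : s ≤ t := le_trans h2 h1
    have hseg := hf.le_on_segment (Set.mem_univ s) (Set.mem_univ t)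
      (by rw [segment_eq_Icc hst]; exact Set.mem_Icc.mpr ⟨h2, h1⟩)
    exact hi.2 (hseg.trans (max_le hfsc hftc))
  have hcard1 : (Finset.univ.filter fun i => t < μ i).card ≤ j - 1 := by
    have hgt : (Finset.univ.filter fun i => piv μ ⟨j - 1, hj1k⟩ < μ i).card ≤ j - 1 :=
      card_gt_piv_le μ ⟨j - 1, hj1k⟩
    refine le_trans (Finset.card_le_card fun i hi => ?_) hgt
    rw [Finset.mem_filter] at hi ⊢
    exact ⟨hi.1, lt_of_le_of_lt ht hi.2⟩
  have hcard2 : (Finset.univ.filter fun i => μ i < s).card ≤ k - 1 - (k - j) := by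
    have hlt : (Finset.univ.filter fun i => μ i < piv μ ⟨k - j, hkjk⟩).card
        ≤ k - 1 - (k - j) := card_lt_piv_le μ ⟨k - j, hkjk⟩
    refine le_trans (Finset.card_le_card fun i hi => ?_) hlt
    rw [Finset.mem_filter] at hi ⊢
    exact ⟨hi.1, lt_of_lt_of_le hi.2 hs⟩
  have hunion := Finset.card_union_le (Finset.univ.filter fun i => t < μ i)
    (Finset.univ.filter fun i => μ i < s)
  have hsubcard := Finset.card_le_card hsub
  have hsplit := Finset.card_filter_add_card_filter_not (s := Finset.univ)
    (p := fun i => f (μ i) ≤ c)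
  have huniv : (Finset.univ : Finset (Fin k)).card = k := by simp
  omega
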